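/- arXiv:2507.00564 — 3 statements merged into one kernel-verified Lean document; each statement's English description precedes it below -/
import Mathlib

section
/- Let f : G → H be a covering projection between finite simple graphs with H connected, let S ⊆ V(G) be a vertex cutset, and let A be the vertex set of a connected component of G − S. Then for any two vertices u, v of H, | |f⁻¹(u) ∩ A| − |f⁻¹(v) ∩ A| | ≤ |S|. -/
open SimpleGraph

/-- A covering projection (locally bijective graph homomorphism). -/
def IsCovering {V W : Type*} {G : SimpleGraph V} {H : SimpleGraph W} (f : G →g H) : Prop :=
  ∀ v : V, Set.BijOn f (G.neighborSet v) (H.neighborSet (f v))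

section Lift

variable {V W : Type*} {G : SimpleGraph V} {H : SimpleGraph W}

noncomputable def nextv (f : G →g H) (hf : IsCovering f) (x : V) (c : W)
    (h : H.Adj (f x) c) : V :=
  ((hf x).2.2 (show c ∈ H.neighborSet (f x) from h)).choose

lemma nextv_adj (f : G →g H) (hf : IsCovering f) (x : V) (c : W) (h : H.Adj (f x) c) :
    G.Adj x (nextv f hf x c h) :=
  ((hf x).2.2 (show c ∈ H.neighborSet (f x) from h)).choose_spec.1

lemma nextv_map (f : G →g H) (hf : IsCovering f) (x : V) (c : W) (h : H.Adj (f x) c) :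
    f (nextv f hf x c h) = c :=
  ((hf x).2.2 (show c ∈ H.neighborSet (f x) from h)).choose_spec.2

noncomputable def liftWalk (f : G →g H) (hf : IsCovering f) :
    ∀ {a b : W}, H.Walk a b → ∀ x : V, f x = a → Σ y : V, G.Walk x y
  | _, _, Walk.nil, x, _ => ⟨x, Walk.nil⟩
  | _, _, Walk.cons h p, x, hx =>
    let r := liftWalk f hf p (nextv f hf x _ (hx ▸ h)) (nextv_map f hf x _ _)
    ⟨r.1, Walk.cons (nextv_adj f hf x _ (hx ▸ h)) r.2⟩

lemma liftWalk_support_map (f : G →g H) (hf : IsCovering f) :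
    ∀ {a b : W} (p : H.Walk a b) (x : V) (hx : f x = a),
      ((liftWalk f hf p x hx).2.support.map f) = p.support := by
  intro a b p
  induction p with
  | nil => intro x hx; simp [liftWalk, hx]
  | cons h p ih =>
    intro x hx
    simp only [liftWalk, Walk.support_cons, List.map_cons, hx]
    rw [ih]

lemma liftWalk_end_map (f : G →g H) (hf : IsCovering f) :
    ∀ {a b : W} (p : H.Walk a b) (x : V) (hx : f x = a),
      f (liftWalk f hf p x hx).1 = b := by
  intro a b p
  induction p with
  | nil => intro x hx; simpa [liftWalk] using hx
  | cons h p ih =>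
    intro x hx
    simp only [liftWalk]
    exact ih _ _

lemma liftWalk_disjoint (f : G →g H) (hf : IsCovering f) :
    ∀ {a b : W} (p : H.Walk a b), p.support.Nodup →
      ∀ (x x' : V) (hx : f x = a) (hx' : f x' = a) (z : V),
        z ∈ (liftWalk f hf p x hx).2.support →
        z ∈ (liftWalk f hf p x' hx').2.support → x = x' := by
  intro a b p
  induction p with
  | nil =>
    intro _ x x' hx hx' z hz hz'
    simp only [liftWalk, Walk.support_nil, List.mem_singleton] at hz hz'
    rw [← hz, hz']
  | cons h p ih =>
    intro hnd x x' hx hx' z hz hz'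
    simp only [Walk.support_cons, List.nodup_cons] at hnd
    simp only [liftWalk, Walk.support_cons, List.mem_cons] at hz hz'
    have hmem : ∀ (y : V) (hy : f y = _) , z ∈ (liftWalk f hf p y hy).2.support →
        f z ∈ p.support := by
      intro y hy hzy
      rw [← liftWalk_support_map f hf p y hy]
      exact List.mem_map_of_mem hzy
    rcases hz with h1 | hz
    · rcases hz' with h2 | hz'
      · exact h1.symm.trans h2
      · have := hmem _ _ hz'
        rw [h1, hx] at this
        exact absurd this hnd.1
    · rcases hz' with h2 | hz'
      · have := hmem _ _ hz
        rw [h2, hx'] at this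
        exact absurd this hnd.1
      · have heq := ih hnd.2 _ _ _ _ z hz hz'
        -- x and x' are neighbors of the common next vertex with equal f-image
        set x₁ := nextv f hf x _ (hx ▸ h) with hx₁
        have hadj1 : G.Adj x₁ x := (nextv_adj f hf x _ (hx ▸ h)).symm
        have hadj2 : G.Adj x₁ x' := by
          rw [heq]; exact (nextv_adj f hf x' _ (hx' ▸ h)).symm
        exact (hf x₁).2.1 hadj1 hadj2 (by rw [hx, hx'])

end Lift

section Component

variable {V : Type*} {G : SimpleGraph V}

lemma walk_stay (S : Finset V)
    (c : (G.induce ((↑S : Set V)ᶜ)).ConnectedComponent) :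
    ∀ {x y : V} (q : G.Walk x y),
      x ∈ Subtype.val '' c.supp → (∀ z ∈ q.support, z ∉ S) →
      y ∈ Subtype.val '' c.supp := by
  intro x y q
  induction q with
  | nil => exact fun h _ => h
  | cons h q ih =>
    intro hx hS
    rename_i xx yy zz
    apply ih
    · obtain ⟨x', hx', hval⟩ := hx
      have hyy : yy ∈ ((↑S : Set V)ᶜ) := by
        simp only [Set.mem_compl_iff, Finset.mem_coe]
        exact hS yy (by simp [Walk.support_cons])
      refine ⟨⟨yy, hyy⟩, ?_, rfl⟩
      have hadj : (G.induce ((↑S : Set V)ᶜ)).Adj x' ⟨yy, hyy⟩ := by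
        simp only [comap_adj, Function.Embedding.coe_subtype, hval]
        exact h
      rw [ConnectedComponent.mem_supp_iff] at hx' ⊢
      rw [← hx']
      exact ConnectedComponent.connectedComponentMk_eq_of_adj hadj.symm
    · intro z hz
      exact hS z (by simp [Walk.support_cons, hz])

end Component

section Key

variable {V W : Type*} {G : SimpleGraph V} {H : SimpleGraph W}

lemma key_ineq [Fintype V] (f : G →g H) (hf : IsCovering f) (S : Finset V)
    (c : (G.induce ((↑S : Set V)ᶜ)).ConnectedComponent)
    {a b : W} (p : H.Walk a b) (hp : p.support.Nodup) :
    (f ⁻¹' {a} ∩ (Subtype.val '' c.supp)).ncard ≤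
      (f ⁻¹' {b} ∩ (Subtype.val '' c.supp)).ncard + S.card := by
  classical
  set A := (Subtype.val '' c.supp : Set V) with hA
  set E : V → V := fun x => if h : f x = a then (liftWalk f hf p x h).1 else x with hE
  have hEdef : ∀ (x : V) (hx : f x = a), E x = (liftWalk f hf p x hx).1 :=
    fun x hx => dif_pos hx
  set Cond : V → Prop := fun x =>
    ∃ s, s ∈ S ∧ ∃ hx : f x = a, s ∈ (liftWalk f hf p x hx).2.support with hCond
  set sel : V → V := fun x => if h : Cond x then h.choose else x with hsel
  have hseldef : ∀ (x : V), Cond x →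
      sel x ∈ S ∧ ∃ hx : f x = a, sel x ∈ (liftWalk f hf p x hx).2.support := by
    intro x h
    simp only [hsel, dif_pos h]
    exact ⟨h.choose_spec.1, h.choose_spec.2⟩
  have hcond : ∀ (x : V) (hx : f x = a), x ∈ A → E x ∉ A → Cond x := by
    intro x hx hxA hend
    rw [hEdef x hx] at hend
    by_contra hcon
    simp only [hCond] at hcon
    push_neg at hcon
    exact hend (walk_stay S c _ hxA (fun z hz hzS => hcon z hzS hx hz))
  set F : V → V ⊕ V := fun x => if E x ∈ A then Sum.inl (E x) else Sum.inr (sel x) with hF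
  set T : Set (V ⊕ V) := Sum.inl '' (f ⁻¹' {b} ∩ A) ∪ Sum.inr '' (↑S : Set V) with hT
  have hmaps : ∀ x ∈ f ⁻¹' {a} ∩ A, F x ∈ T := by
    rintro x ⟨hx, hxA⟩
    have hx' : f x = a := hx
    rw [hF]
    by_cases hend : E x ∈ A
    · simp only [if_pos hend]
      refine Or.inl ⟨_, ⟨?_, hend⟩, rfl⟩
      rw [hEdef x hx']
      exact liftWalk_end_map f hf p x hx'
    · simp only [if_neg hend]
      exact Or.inr ⟨_, (hseldef x (hcond x hx' hxA hend)).1, rfl⟩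
  have hinj : Set.InjOn F (f ⁻¹' {a} ∩ A) := by
    rintro x ⟨hx, hxA⟩ x' ⟨hx', hx'A⟩ heq
    have hx1 : f x = a := hx
    have hx1' : f x' = a := hx'
    rw [hF] at heq
    by_cases h1 : E x ∈ A <;> by_cases h2 : E x' ∈ A
    · simp only [if_pos h1, if_pos h2] at heq
      have hends := Sum.inl_injective heq
      rw [hEdef x hx1, hEdef x' hx1'] at hends
      exact liftWalk_disjoint f hf p hp x x' hx1 hx1' _
        (Walk.end_mem_support _) (by rw [hends]; exact Walk.end_mem_support _)
    · simp only [if_pos h1, if_neg h2] at heq; exact absurd heq (by simp)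
    · simp only [if_neg h1, if_pos h2] at heq; exact absurd heq (by simp)
    · simp only [if_neg h1, if_neg h2] at heq
      have hs := Sum.inr_injective heq
      obtain ⟨-, hxa, hmem1⟩ := hseldef x (hcond x hx1 hxA h1)
      obtain ⟨-, hx'a, hmem2⟩ := hseldef x' (hcond x' hx1' hx'A h2)
      exact liftWalk_disjoint f hf p hp x x' hxa hx'a _ hmem1 (hs ▸ hmem2)
  have hle : (f ⁻¹' {a} ∩ A).ncard ≤ T.ncard :=
    Set.ncard_le_ncard_of_injOn F hmaps hinj (Set.toFinite T)
  have hTcard : T.ncard = (f ⁻¹' {b} ∩ A).ncard + S.card := by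
    rw [hT, Set.ncard_union_eq (by
        rw [Set.disjoint_left]
        rintro _ ⟨y, _, rfl⟩ ⟨s, _, hss⟩
        exact Sum.inl_ne_inr hss.symm) (Set.toFinite _) (Set.toFinite _),
      Set.ncard_image_of_injective _ Sum.inl_injective,
      Set.ncard_image_of_injective _ Sum.inr_injective,
      Set.ncard_coe_finset]
  omega

end Key

theorem cutset_fiber_bound {V W : Type*} [Fintype V] [Fintype W]
    {G : SimpleGraph V} {H : SimpleGraph W}
    (f : G →g H) (hf : IsCovering f) (hH : H.Connected)
    (S : Finset V) (hS : ¬ (G.induce ((↑S : Set V)ᶜ)).Connected)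
    (A : Set V)
    (hA : ∃ c : (G.induce ((↑S : Set V)ᶜ)).ConnectedComponent,
      A = Subtype.val '' c.supp)
    (u v : W) :
    |((f ⁻¹' {u} ∩ A).ncard : ℤ) - ((f ⁻¹' {v} ∩ A).ncard : ℤ)| ≤ S.card := by
  classical
  obtain ⟨c, rfl⟩ := hA
  obtain ⟨w⟩ := hH.preconnected u v
  have hnd : w.toPath.1.support.Nodup := w.toPath.2.support_nodup
  have h1 := key_ineq f hf S c w.toPath.1 hnd
  have h2 := key_ineq f hf S c w.toPath.1.reverse
    (by rw [Walk.support_reverse]; exact List.nodup_reverse.mpr hnd)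
  rw [abs_sub_le_iff]
  omega
end

section
/- Every finite k-regular bipartite simple multigraph is k-edge-colorable; that is, its edge set is a union of k perfect matchings. -/
open SimpleGraph Finset

section Aux

variable {V : Type*} [Fintype V]

/-- Lift a subgraph along a graph inclusion. -/
def liftSub {G G' : SimpleGraph V} (h : G' ≤ G) (H : G'.Subgraph) : G.Subgraph where
  verts := H.verts
  Adj := H.Adj
  adj_sub := fun hadj => h (H.adj_sub hadj)
  edge_vert := fun hadj => H.edge_vert hadj
  symm := H.symm

lemma liftSub_edgeSet {G G' : SimpleGraph V} (h : G' ≤ G) (H : G'.Subgraph) :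
    (liftSub h H).edgeSet = H.edgeSet := rfl

lemma liftSub_pm {G G' : SimpleGraph V} (h : G' ≤ G) {H : G'.Subgraph}
    (hH : H.IsPerfectMatching) : (liftSub h H).IsPerfectMatching := by
  obtain ⟨hm, hs⟩ := hH
  exact ⟨hm, hs⟩

/-- Build a perfect-matching subgraph from a fixed-point-free adjacency involution. -/
def matchSub (G : SimpleGraph V) (f : V → V) (hf : ∀ v, G.Adj v (f v))
    (hinv : ∀ v, f (f v) = v) : G.Subgraph where
  verts := Set.univ
  Adj u v := f u = v ∨ f v = u
  adj_sub := by
    rintro u v (rfl | rfl)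
    · exact hf u
    · exact (hf v).symm
  edge_vert := fun _ => trivial
  symm := by
    constructor
    rintro u v (rfl | rfl)
    · exact Or.inr rfl
    · exact Or.inl rfl

lemma matchSub_pm (G : SimpleGraph V) (f : V → V) (hf : ∀ v, G.Adj v (f v))
    (hinv : ∀ v, f (f v) = v) : (matchSub G f hf hinv).IsPerfectMatching := by
  constructor
  · intro v _
    refine ⟨f v, Or.inl rfl, ?_⟩
    rintro w (rfl | rfl)
    · rfl
    · exact (hinv w).symm
  · intro v; trivial

lemma matchSub_adj_iff (G : SimpleGraph V) (f : V → V) (hf : ∀ v, G.Adj v (f v))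
    (hinv : ∀ v, f (f v) = v) (u v : V) :
    (matchSub G f hf hinv).Adj u v ↔ f u = v := by
  constructor
  · rintro (rfl | rfl)
    · rfl
    · exact hinv v
  · exact Or.inl

/-- A positively regular graph with a proper 2-coloring has a perfect matching. -/
lemma exists_pm (G : SimpleGraph V) (C : G.Coloring (Fin 2)) {k : ℕ} (hk : 0 < k)
    (hreg : ∀ v, (G.neighborSet v).ncard = k) :
    ∃ M : G.Subgraph, M.IsPerfectMatching := by
  classical
  have hdeg : ∀ v, (G.neighborFinset v).card = k := by
    intro v
    rw [neighborFinset_def, ← Set.ncard_eq_toFinset_card', hreg v]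
  -- side change along an edge
  have hside : ∀ {u v : V}, G.Adj u v → C u = 0 → C v ≠ 0 := by
    intro u v huv hu hv
    exact C.valid huv (by rw [hu, hv])
  have hside' : ∀ {u v : V}, G.Adj u v → C u ≠ 0 → C v = 0 := by
    intro u v huv hu
    by_contra hv
    exact C.valid huv (by omega)
  -- Hall's condition
  set ι := {v : V // C v = 0} with hι
  have hall : ∀ s : Finset ι, s.card ≤ (s.biUnion fun a => G.neighborFinset a.1).card := by
    intro s
    set T := s.biUnion fun a => G.neighborFinset a.1 with hT
    have h1 : ∀ a ∈ s, k ≤ (T.bipartiteAbove (fun (a : ι) (b : V) => G.Adj a.1 b) a).card := by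
      intro a ha
      rw [← hdeg a.1]
      apply Finset.card_le_card
      intro b hb
      rw [mem_neighborFinset] at hb
      rw [Finset.mem_bipartiteAbove]
      exact ⟨Finset.mem_biUnion.mpr ⟨a, ha, (mem_neighborFinset _ _ _).mpr hb⟩, hb⟩
    have h2 : ∀ b ∈ T, (s.bipartiteBelow (fun (a : ι) (b : V) => G.Adj a.1 b) b).card ≤ k := by
      intro b _
      rw [← hdeg b]
      apply Finset.card_le_card_of_injOn (fun a => a.1)
      · intro a ha
        rw [Finset.mem_coe, Finset.mem_bipartiteBelow] at ha
        exact (mem_neighborFinset _ _ _).mpr ha.2.symm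
      · exact fun x _ y _ h => Subtype.ext h
    have := Finset.card_nsmul_le_card_nsmul (R := ℕ)
      (fun (a : ι) (b : V) => G.Adj a.1 b) h1 h2
    exact Nat.le_of_mul_le_mul_right (by simpa [smul_eq_mul] using this) hk
  obtain ⟨f, hfinj, hfmem⟩ :=
    (Finset.all_card_le_biUnion_card_iff_existsInjective' (fun a : ι => G.neighborFinset a.1)).mp
      hall
  -- f lands in the other side
  have hfadj : ∀ a : ι, G.Adj a.1 (f a) := fun a => (mem_neighborFinset _ _ _).mp (hfmem a)
  set β := {v : V // C v ≠ 0} with hβ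
  have hcard : Fintype.card ι = Fintype.card β := by
    have h1 : ∀ a ∈ (Finset.univ.filter fun v : V => C v = 0),
        k ≤ ((Finset.univ.filter fun v : V => C v ≠ 0).bipartiteAbove G.Adj a).card ∧
        ((Finset.univ.filter fun v : V => C v ≠ 0).bipartiteAbove G.Adj a).card ≤ k := by
      intro a ha
      rw [Finset.mem_filter] at ha
      have : (Finset.univ.filter fun v : V => C v ≠ 0).bipartiteAbove G.Adj a
          = G.neighborFinset a := by
        ext b
        simp only [Finset.mem_bipartiteAbove, Finset.mem_filter, Finset.mem_univ, true_and,
          mem_neighborFinset]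
        exact ⟨fun h => h.2, fun h => ⟨hside h ha.2, h⟩⟩
      rw [this, hdeg a]
      exact ⟨le_rfl, le_rfl⟩
    have h2 : ∀ b ∈ (Finset.univ.filter fun v : V => C v ≠ 0),
        k ≤ ((Finset.univ.filter fun v : V => C v = 0).bipartiteBelow G.Adj b).card ∧
        ((Finset.univ.filter fun v : V => C v = 0).bipartiteBelow G.Adj b).card ≤ k := by
      intro b hb
      rw [Finset.mem_filter] at hb
      have : (Finset.univ.filter fun v : V => C v = 0).bipartiteBelow G.Adj b
          = G.neighborFinset b := by
        ext a
        simp only [Finset.mem_bipartiteBelow, Finset.mem_filter, Finset.mem_univ, true_and,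
          mem_neighborFinset]
        exact ⟨fun h => h.2.symm, fun h => ⟨hside' h hb.2, h.symm⟩⟩
      rw [this, hdeg b]
      exact ⟨le_rfl, le_rfl⟩
    have hle := Finset.card_nsmul_le_card_nsmul (R := ℕ) G.Adj
      (fun a ha => (h1 a ha).1) (fun b hb => (h2 b hb).2)
    have hge := Finset.card_nsmul_le_card_nsmul' (R := ℕ) G.Adj
      (fun b hb => (h2 b hb).1) (fun a ha => (h1 a ha).2)
    have hAB : (Finset.univ.filter fun v : V => C v = 0).card
        = (Finset.univ.filter fun v : V => C v ≠ 0).card := by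
      have := le_antisymm hle hge
      simpa [smul_eq_mul, Nat.mul_left_cancel_iff hk] using
        (Nat.eq_of_mul_eq_mul_right hk (by simpa [smul_eq_mul] using this))
    show Fintype.card {v : V // C v = 0} = Fintype.card {v : V // C v ≠ 0}
    rw [Fintype.card_subtype, Fintype.card_subtype]
    exact hAB
  -- build the bijection
  have hfβ : ∀ a : ι, C (f a) ≠ 0 := fun a => hside (hfadj a) a.2
  let f' : ι → β := fun a => ⟨f a, hfβ a⟩
  have hf'inj : Function.Injective f' := by
    intro a b hab
    exact hfinj (congrArg Subtype.val hab)
  have hf'bij : Function.Bijective f' :=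
    (Fintype.bijective_iff_injective_and_card f').mpr ⟨hf'inj, hcard⟩
  let e := Equiv.ofBijective f' hf'bij
  -- the total involution
  let F : V → V := fun v => if h : C v = 0 then (e ⟨v, h⟩ : V) else ((e.symm ⟨v, h⟩ : ι) : V)
  have hFA : ∀ v (h : C v = 0), F v = (e ⟨v, h⟩ : V) := by
    intro v h; simp only [F, dif_pos h]
  have hFB : ∀ v (h : C v ≠ 0), F v = ((e.symm ⟨v, h⟩ : ι) : V) := by
    intro v h; simp only [F, dif_neg h]
  have headj : ∀ a : ι, G.Adj a.1 (e a) := fun a => hfadj a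
  have hFadj : ∀ v, G.Adj v (F v) := by
    intro v
    by_cases h : C v = 0
    · rw [hFA v h]; exact headj ⟨v, h⟩
    · rw [hFB v h]
      have := headj (e.symm ⟨v, h⟩)
      have h2 : (e (e.symm ⟨v, h⟩) : V) = v := by rw [Equiv.apply_symm_apply]
      rw [h2] at this
      exact this.symm
  have hFinv : ∀ v, F (F v) = v := by
    intro v
    by_cases h : C v = 0
    · rw [hFA v h]
      have hb : C ((e ⟨v, h⟩ : β) : V) ≠ 0 := (e ⟨v, h⟩).2
      rw [hFB _ hb]
      have : (⟨((e ⟨v, h⟩ : β) : V), hb⟩ : β) = e ⟨v, h⟩ := Subtype.ext rfl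
      rw [this, Equiv.symm_apply_apply]
    · rw [hFB v h]
      have ha : C ((e.symm ⟨v, h⟩ : ι) : V) = 0 := (e.symm ⟨v, h⟩).2
      rw [hFA _ ha]
      have : (⟨((e.symm ⟨v, h⟩ : ι) : V), ha⟩ : ι) = e.symm ⟨v, h⟩ := Subtype.ext rfl
      rw [this, Equiv.apply_symm_apply]
  exact ⟨matchSub G F hFadj hFinv, matchSub_pm G F hFadj hFinv⟩

lemma decomp (k : ℕ) : ∀ (G : SimpleGraph V) (_ : G.Coloring (Fin 2))
    (_ : ∀ v, (G.neighborSet v).ncard = k),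
    ∃ M : Fin k → G.Subgraph,
      (∀ i, (M i).IsPerfectMatching) ∧
      (∀ i j, i ≠ j → Disjoint (M i).edgeSet (M j).edgeSet) ∧
      (⋃ i, (M i).edgeSet) = G.edgeSet := by
  induction k with
  | zero =>
    intro G C hreg
    refine ⟨Fin.elim0, fun i => i.elim0, fun i => i.elim0, ?_⟩
    rw [Set.iUnion_of_empty]
    symm
    rw [Set.eq_empty_iff_forall_notMem]
    intro ed hed
    induction ed with
    | h u v =>
      rw [mem_edgeSet] at hed
      have h0 := hreg u
      rw [Set.ncard_eq_zero (Set.toFinite _)] at h0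
      exact (Set.eq_empty_iff_forall_notMem.mp h0 v) hed
  | succ k ih =>
    intro G C hreg
    classical
    obtain ⟨M₀, hM₀⟩ := exists_pm G C (Nat.succ_pos k) hreg
    set G' := G.deleteEdges M₀.edgeSet with hG'
    have hle : G' ≤ G := SimpleGraph.deleteEdges_le _
    have C' : G'.Coloring (Fin 2) := ⟨C, fun h => C.valid (hle h)⟩
    have hreg' : ∀ v, (G'.neighborSet v).ncard = k := by
      intro v
      obtain ⟨w, hw, hwuniq⟩ := hM₀.1 (hM₀.2 v)
      have hset : G'.neighborSet v = G.neighborSet v \ {w} := by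
        ext u
        simp only [mem_neighborSet, Set.mem_diff, Set.mem_singleton_iff, hG',
          SimpleGraph.deleteEdges_adj, Subgraph.mem_edgeSet]
        constructor
        · rintro ⟨h1, h2⟩
          exact ⟨h1, fun h => h2 (h ▸ hw)⟩
        · rintro ⟨h1, h2⟩
          exact ⟨h1, fun h => h2 (hwuniq u h)⟩
      rw [hset, Set.ncard_diff_singleton_of_mem (by exact M₀.adj_sub hw),
        hreg v]
      omega
    obtain ⟨M', hpm', hdisj', hunion'⟩ := ih G' C' hreg'
    refine ⟨Fin.cons M₀ (fun i => liftSub hle (M' i)), ?_, ?_, ?_⟩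
    · intro i
      obtain rfl | ⟨i', rfl⟩ := i.eq_zero_or_eq_succ
      · rw [Fin.cons_zero]; exact hM₀
      · rw [Fin.cons_succ]; exact liftSub_pm hle (hpm' i')
    · have hsub : ∀ i, (liftSub hle (M' i)).edgeSet ⊆ G'.edgeSet := by
        intro i
        rw [liftSub_edgeSet]
        exact Subgraph.edgeSet_subset (M' i)
      have hG'edge : G'.edgeSet = G.edgeSet \ M₀.edgeSet := SimpleGraph.edgeSet_deleteEdges _
      have hd0 : ∀ i, Disjoint M₀.edgeSet (liftSub hle (M' i)).edgeSet := by
        intro i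
        apply Set.disjoint_left.mpr
        intro ed h0 h1
        have := hsub i h1
        rw [hG'edge] at this
        exact this.2 h0
      intro i j hij
      obtain rfl | ⟨i', rfl⟩ := i.eq_zero_or_eq_succ <;>
        obtain rfl | ⟨j', rfl⟩ := j.eq_zero_or_eq_succ
      · exact absurd rfl hij
      · rw [Fin.cons_zero, Fin.cons_succ]; exact hd0 j'
      · rw [Fin.cons_zero, Fin.cons_succ]; exact (hd0 i').symm
      · rw [Fin.cons_succ, Fin.cons_succ, liftSub_edgeSet, liftSub_edgeSet]
        exact hdisj' i' j' (fun h => hij (by rw [h]))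
    · have hstep : (⋃ i, ((Fin.cons M₀ (fun i => liftSub hle (M' i)) : Fin (k+1) → G.Subgraph) i).edgeSet)
          = M₀.edgeSet ∪ ⋃ i, (liftSub hle (M' i)).edgeSet := by
        ext ed
        simp only [Set.mem_iUnion, Set.mem_union]
        constructor
        · rintro ⟨i, hi⟩
          obtain rfl | ⟨i2, rfl⟩ := i.eq_zero_or_eq_succ
          · rw [Fin.cons_zero] at hi; exact Or.inl hi
          · rw [Fin.cons_succ] at hi; exact Or.inr ⟨i2, hi⟩
        · rintro (h | ⟨i, hi⟩)
          · exact ⟨0, by rwa [Fin.cons_zero]⟩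
          · exact ⟨i.succ, by rwa [Fin.cons_succ]⟩
      rw [hstep]
      have h2 : (⋃ i, (liftSub hle (M' i)).edgeSet) = G'.edgeSet := by
        simp only [liftSub_edgeSet]
        exact hunion'
      rw [h2, SimpleGraph.edgeSet_deleteEdges]
      exact Set.union_diff_cancel (Subgraph.edgeSet_subset M₀)

end Aux

theorem regular_bipartite_edge_coloring {V : Type*} [Fintype V]
    (G : SimpleGraph V) (hbip : G.Colorable 2) (k : ℕ)
    (hreg : ∀ v, (G.neighborSet v).ncard = k) :
    ∃ M : Fin k → G.Subgraph,
      (∀ i, (M i).IsPerfectMatching) ∧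
      (∀ i j, i ≠ j → Disjoint (M i).edgeSet (M j).edgeSet) ∧
      (⋃ i, (M i).edgeSet) = G.edgeSet := by
  obtain ⟨C⟩ := hbip
  exact decomp k G C hreg
end

section
/- Let H be a finite simple graph and let H × K2 denote the bipartite double cover of H. If G covers H × K2 then G is bipartite and G covers H. Conversely, if G is bipartite and covers H, then G covers H × K2, provided H is not bipartite. -/
open SimpleGraph

/-- The bipartite double cover $H × K_2$. -/
def doubleCover {W : Type*} (H : SimpleGraph W) : SimpleGraph (W × Bool) where
  Adj x y := H.Adj x.1 y.1 ∧ y.2 = !x.2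
  symm := by
    constructor
    rintro ⟨u, i⟩ ⟨v, j⟩ ⟨h, hj⟩
    exact ⟨h.symm, by subst hj; simp⟩
  loopless := by constructor; rintro ⟨u, i⟩ ⟨h, _⟩; exact H.irrefl h

/-- `G` covers `H`. -/
def Covers {V W : Type*} (G : SimpleGraph V) (H : SimpleGraph W) : Prop :=
  ∃ f : G →g H, IsCovering f

theorem double_cover_characterization {V W : Type*} [Fintype V] [Fintype W]
    (G : SimpleGraph V) (H : SimpleGraph W) :
    (Covers G (doubleCover H) → G.Colorable 2 ∧ Covers G H) ∧
    (¬ H.Colorable 2 → G.Colorable 2 → Covers G H → Covers G (doubleCover H)) := by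
  constructor
  · rintro ⟨f, hf⟩
    constructor
    · exact ⟨⟨fun v => if (f v).2 then 1 else 0, by
        intro u v huv
        have h := f.map_adj huv
        simp only [doubleCover] at h
        rcases h with ⟨-, h2⟩
        cases hu : (f u).2 <;> cases hv : (f v).2 <;>
          have h3 : (f v).2 = !(f u).2 := (f.map_adj huv).2 <;> rw [hu, hv] at h3 <;> simp at h3 ⊢⟩⟩
    · refine ⟨⟨fun v => (f v).1, fun huv => (f.map_adj huv).1⟩, ?_⟩
      intro v
      have h1 := hf v
      have h2 : Set.BijOn Prod.fst ((doubleCover H).neighborSet (f v))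
          (H.neighborSet (f v).1) := by
        refine ⟨?_, ?_, ?_⟩
        · rintro ⟨w, j⟩ hw; exact hw.1
        · rintro ⟨w, j⟩ hw ⟨w', j'⟩ hw' h
          have e1 : j = !(f v).2 := hw.2
          have e2 : j' = !(f v).2 := hw'.2
          simp only [Prod.fst] at h
          subst e1; subst e2; subst h; rfl
        · rintro w hw
          exact ⟨(w, !(f v).2), ⟨hw, rfl⟩, rfl⟩
      exact h2.comp h1
  · rintro _ ⟨c⟩ ⟨f, hf⟩
    set b : V → Bool := fun v => decide (c v = 1) with hb
    have hadj : ∀ {u v : V}, G.Adj u v → b v = !b u := by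
      intro u v huv
      have h := c.valid huv
      have h1 := (c u).isLt
      have h2 := (c v).isLt
      by_cases e1 : c u = 1 <;> by_cases e2 : c v = 1 <;>
        simp_all [hb, Fin.ext_iff] <;> omega
    refine ⟨⟨fun v => (f v, b v), fun huv => ⟨f.map_adj huv, hadj huv⟩⟩, ?_⟩
    intro v
    refine ⟨?_, ?_, ?_⟩
    · intro u hu
      exact ⟨(hf v).mapsTo hu, hadj hu⟩
    · intro u hu u' hu' h
      exact (hf v).injOn hu hu' (congrArg Prod.fst h)
    · rintro ⟨w, j⟩ ⟨hw1, hw2⟩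
      obtain ⟨u, hu, hfu⟩ := (hf v).surjOn hw1
      refine ⟨u, hu, ?_⟩
      show (f u, b u) = (w, j)
      rw [hfu, hadj hu]
      exact Prod.ext rfl hw2.symm
end
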